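/- Spectral representation of the response of the finite system: let N ≥ 1 and (b_1,…,b_N) ∈ ℝ^N, and assume (λ_k)_{k=1}^N are eigenvalues of H_N with eigenvectors (φ^k)_{k=1}^N satisfying H_N φ^k = λ_k φ^k and φ^k_1 = 1, such that (φ^1,…,φ^N) is an orthogonal basis of ℝ^N, and set ρ_k := ⟨φ^k, φ^k⟩. Then for every t ≥ 0: v^δ_{1,t} = Σ_{k=1}^N T_t(λ_k)/ρ_k, where δ is the control with δ_0 = 1 and δ_t = 0 for t ≥ 1. -/

import Mathlib

/-- `solFin N b f t n` is the solution `v^f_{n,t}` of the finite discrete Schrödinger system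
with Dirichlet condition at `n = N+1`:
`v_{n,t+1} + v_{n,t-1} - v_{n+1,t} - v_{n-1,t} + b_n v_{n,t} = 0` for `1 ≤ n ≤ N`, `t ≥ 0`,
`v_{n,-1} = v_{n,0} = 0`, `v_{0,t} = f_t`, `v_{N+1,t} = 0`
(the first argument after `b f` is the time `t`, the last the space variable `n`). -/
noncomputable def solFin (N : ℕ) (b f : ℕ → ℝ) : ℕ → ℕ → ℝ
  | 0, n => if n = 0 then f 0 else 0
  | 1, n => if n = 0 then f 1 else if n = N + 1 then 0 else
      solFin N b f 0 (n + 1) + solFin N b f 0 (n - 1) - b n * solFin N b f 0 n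
  | (t + 2), n => if n = 0 then f (t + 2) else if n = N + 1 then 0 else
      solFin N b f (t + 1) (n + 1) + solFin N b f (t + 1) (n - 1) - b n * solFin N b f (t + 1) n
        - solFin N b f t n

/-- `cheb lam t` is the polynomial sequence `T_t(λ)` with `T_0 = 0`, `T_1 = 1`,
`T_{t+1}(λ) = λ T_t(λ) - T_{t-1}(λ)` (so `T_t(2x) = U_{t-1}(x)`, Chebyshev of the 2nd kind). -/
noncomputable def cheb (lam : ℝ) : ℕ → ℝ
  | 0 => 0
  | 1 => 1
  | (t + 2) => lam * cheb lam (t + 1) - cheb lam t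

/-- The `N × N` symmetric Jacobi matrix `H_N` with diagonal `-b_i` and off-diagonal `1`. -/
noncomputable def jacobiH (N : ℕ) (b : ℕ → ℝ) : Matrix (Fin N) (Fin N) ℝ :=
  Matrix.of fun i j =>
    if (i : ℕ) = (j : ℕ) then -b ((i : ℕ) + 1)
    else if (i : ℕ) + 1 = (j : ℕ) ∨ (j : ℕ) + 1 = (i : ℕ) then 1 else 0

lemma solFin_left (N : ℕ) (b f : ℕ → ℝ) (t : ℕ) : solFin N b f t 0 = f t := by
  match t with
  | 0 => simp [solFin]
  | 1 => simp [solFin]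
  | t+2 => simp [solFin]

lemma solFin_right (N : ℕ) (b f : ℕ → ℝ) (t : ℕ) : solFin N b f t (N+1) = 0 := by
  match t with
  | 0 => simp [solFin]
  | 1 => simp [solFin]
  | t+2 => simp [solFin]

lemma solFin_one (N : ℕ) (b f : ℕ → ℝ) (n : ℕ) (h0 : n ≠ 0) (hN : n ≠ N+1) :
    solFin N b f 1 n = solFin N b f 0 (n+1) + solFin N b f 0 (n-1) - b n * solFin N b f 0 n := by
  conv_lhs => rw [solFin]
  rw [if_neg h0, if_neg hN]

lemma solFin_step (N : ℕ) (b f : ℕ → ℝ) (t n : ℕ) (h0 : n ≠ 0) (hN : n ≠ N+1) :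
    solFin N b f (t+2) n = solFin N b f (t+1) (n+1) + solFin N b f (t+1) (n-1)
      - b n * solFin N b f (t+1) n - solFin N b f t n := by
  conv_lhs => rw [solFin]
  rw [if_neg h0, if_neg hN]

lemma jacobi_mulVec (N : ℕ) (b : ℕ → ℝ) (x : Fin N → ℝ) (i : Fin N) :
    (jacobiH N b).mulVec x i =
      (if h : (i:ℕ)+1 < N then x ⟨(i:ℕ)+1, h⟩ else 0)
      + (if h : 0 < (i:ℕ) then x ⟨(i:ℕ)-1, lt_of_le_of_lt (Nat.sub_le _ _) i.isLt⟩ else 0)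
      - b ((i:ℕ)+1) * x i := by
  have hsplit : ∀ j : Fin N,
      (jacobiH N b) i j * x j =
        (if j = i then -(b ((i:ℕ)+1) * x j) else 0)
        + (if (i:ℕ)+1 = (j:ℕ) then x j else 0)
        + (if (j:ℕ)+1 = (i:ℕ) then x j else 0) := by
    intro j
    simp only [jacobiH, Matrix.of_apply]
    by_cases h1 : (i:ℕ) = (j:ℕ)
    · rw [if_pos h1, if_pos (Fin.ext h1).symm, if_neg (by omega : ¬((i:ℕ)+1 = (j:ℕ))),
        if_neg (by omega : ¬((j:ℕ)+1 = (i:ℕ)))]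
      ring
    · have hji : ¬(j = i) := fun he => h1 (by rw [he])
      rw [if_neg h1, if_neg hji]
      by_cases h2 : (i:ℕ)+1 = (j:ℕ)
      · rw [if_pos (Or.inl h2), if_pos h2, if_neg (by omega : ¬((j:ℕ)+1 = (i:ℕ)))]
        ring
      · rw [if_neg h2]
        by_cases h3 : (j:ℕ)+1 = (i:ℕ)
        · rw [if_pos (Or.inr h3), if_pos h3]
          ring
        · rw [if_neg (by tauto : ¬((i:ℕ)+1 = (j:ℕ) ∨ (j:ℕ)+1 = (i:ℕ))), if_neg h3]
          ring
  have hsum : (jacobiH N b).mulVec x i = ∑ j, (jacobiH N b) i j * x j := rfl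
  rw [hsum, Finset.sum_congr rfl (fun j _ => hsplit j)]
  rw [Finset.sum_add_distrib, Finset.sum_add_distrib]
  have s1 : (∑ j : Fin N, if j = i then -(b ((i:ℕ)+1) * x j) else 0)
      = -(b ((i:ℕ)+1) * x i) := by
    rw [Finset.sum_ite_eq' Finset.univ i (fun j => -(b ((i:ℕ)+1) * x j))]
    simp
  have s2 : (∑ j : Fin N, if (i:ℕ)+1 = (j:ℕ) then x j else 0)
      = (if h : (i:ℕ)+1 < N then x ⟨(i:ℕ)+1, h⟩ else 0) := by
    by_cases h : (i:ℕ)+1 < N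
    · rw [dif_pos h]
      have : ∀ j : Fin N, (if (i:ℕ)+1 = (j:ℕ) then x j else 0)
          = (if j = (⟨(i:ℕ)+1, h⟩ : Fin N) then x j else 0) := by
        intro j
        exact if_congr (by simp [Fin.ext_iff]; omega) rfl rfl
      rw [Finset.sum_congr rfl (fun j _ => this j),
        Finset.sum_ite_eq' Finset.univ (⟨(i:ℕ)+1, h⟩ : Fin N) x]
      simp
    · rw [dif_neg h]
      exact Finset.sum_eq_zero fun j _ => if_neg (by have := j.isLt; omega)
  have s3 : (∑ j : Fin N, if (j:ℕ)+1 = (i:ℕ) then x j else 0)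
      = (if h : 0 < (i:ℕ) then x ⟨(i:ℕ)-1, lt_of_le_of_lt (Nat.sub_le _ _) i.isLt⟩ else 0) := by
    by_cases h : 0 < (i:ℕ)
    · rw [dif_pos h]
      have : ∀ j : Fin N, (if (j:ℕ)+1 = (i:ℕ) then x j else 0)
          = (if j = (⟨(i:ℕ)-1, lt_of_le_of_lt (Nat.sub_le _ _) i.isLt⟩ : Fin N) then x j else 0) := by
        intro j
        exact if_congr (by simp [Fin.ext_iff]; omega) rfl rfl
      rw [Finset.sum_congr rfl (fun j _ => this j),
        Finset.sum_ite_eq' Finset.univ _ x]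
      simp
    · rw [dif_neg h]
      exact Finset.sum_eq_zero fun j _ => if_neg (by omega)
  rw [s1, s2, s3]
  ring

open Matrix in
lemma orth_expand (N : ℕ) (hN : 1 ≤ N) (phi : Fin N → (Fin N → ℝ))
    (hfirst : ∀ k, phi k ⟨0, hN⟩ = 1)
    (horth : ∀ k l, k ≠ l → dotProduct (phi k) (phi l) = 0)
    (rho : Fin N → ℝ) (hrho : ∀ k, rho k = dotProduct (phi k) (phi k)) (i : Fin N) :
    ∑ k, phi k i / rho k = if (i:ℕ) = 0 then 1 else 0 := by
  have hne : ∀ k, rho k ≠ 0 := by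
    intro k
    have hpos : 0 < rho k := by
      rw [hrho, dotProduct]
      refine Finset.sum_pos' (fun j _ => mul_self_nonneg _) ?_
      exact ⟨⟨0, hN⟩, Finset.mem_univ _, by rw [hfirst]; norm_num⟩
    exact ne_of_gt hpos
  set P : Matrix (Fin N) (Fin N) ℝ := Matrix.of (fun k j => phi k j) with hPdef
  have hPPt : P * Pᵀ = Matrix.diagonal rho := by
    ext k l
    rw [Matrix.mul_apply, Matrix.diagonal_apply]
    by_cases h : k = l
    · subst h
      rw [if_pos rfl, hrho k, dotProduct]
      rfl
    · rw [if_neg h]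
      have := horth k l h
      rw [dotProduct] at this
      exact this
  have hright : P * (Pᵀ * Matrix.diagonal (fun k => (rho k)⁻¹)) = 1 := by
    rw [← Matrix.mul_assoc, hPPt, Matrix.diagonal_mul_diagonal]
    have : (fun k => rho k * (rho k)⁻¹) = fun _ => (1:ℝ) :=
      funext fun k => mul_inv_cancel₀ (hne k)
    rw [this, Matrix.diagonal_one]
  have hleft : (Pᵀ * Matrix.diagonal (fun k => (rho k)⁻¹)) * P = 1 :=
    mul_eq_one_comm.mp hright
  calc ∑ k, phi k i / rho k
      = ∑ k, (Pᵀ * Matrix.diagonal (fun k => (rho k)⁻¹)) i k * P k ⟨0, hN⟩ := by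
        refine Finset.sum_congr rfl fun k _ => ?_
        rw [Matrix.mul_diagonal]
        simp [hPdef, hfirst, div_eq_mul_inv]
    _ = ((Pᵀ * Matrix.diagonal (fun k => (rho k)⁻¹)) * P) i ⟨0, hN⟩ :=
        (Matrix.mul_apply).symm
    _ = (1 : Matrix (Fin N) (Fin N) ℝ) i ⟨0, hN⟩ := by rw [hleft]
    _ = if (i:ℕ) = 0 then 1 else 0 := by
        rw [Matrix.one_apply]
        exact if_congr (by simp [Fin.ext_iff]) rfl rfl

/-- Spectral representation of the response of the finite system:
`v^δ_{1,t} = Σ_k T_t(λ_k) / ρ_k`. -/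
theorem spectral_response (N : ℕ) (hN : 1 ≤ N) (b : ℕ → ℝ)
    (lam : Fin N → ℝ) (phi : Fin N → (Fin N → ℝ))
    (heig : ∀ k, (jacobiH N b).mulVec (phi k) = lam k • phi k)
    (hfirst : ∀ k, phi k ⟨0, hN⟩ = 1)
    (horth : ∀ k l, k ≠ l → dotProduct (phi k) (phi l) = 0)
    (rho : Fin N → ℝ) (hrho : ∀ k, rho k = dotProduct (phi k) (phi k)) :
    ∀ t : ℕ, solFin N b (fun s => if s = 0 then 1 else 0) t 1 =
      ∑ k, cheb (lam k) t / rho k := by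
  set f : ℕ → ℝ := (fun s => if s = 0 then 1 else 0) with hf
  have hexp := orth_expand N hN phi hfirst horth rho hrho
  have key : ∀ t : ℕ,
      (∀ i : Fin N, solFin N b f t ((i:ℕ)+1) = ∑ k, cheb (lam k) t / rho k * phi k i) ∧
      (∀ i : Fin N, solFin N b f (t+1) ((i:ℕ)+1) = ∑ k, cheb (lam k) (t+1) / rho k * phi k i) := by
    intro t
    induction t with
    | zero =>
      refine ⟨fun i => ?_, fun i => ?_⟩
      · simp [solFin, cheb]
      · have hi0 : (i:ℕ) + 1 ≠ 0 := by omega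
        have hiN : (i:ℕ) + 1 ≠ N + 1 := by have := i.isLt; omega
        rw [show (0:ℕ)+1 = 1 from rfl, solFin_one N b f _ hi0 hiN]
        have e1 : solFin N b f 0 ((i:ℕ)+1+1) = 0 := by simp [solFin]
        have e2 : solFin N b f 0 ((i:ℕ)+1-1) = if (i:ℕ) = 0 then 1 else 0 := by
          simp [solFin, hf]
        have e3 : solFin N b f 0 ((i:ℕ)+1) = 0 := by simp [solFin]
        rw [e1, e2, e3]
        have hs : ∑ k, cheb (lam k) 1 / rho k * phi k i = ∑ k, phi k i / rho k := by
          refine Finset.sum_congr rfl fun k _ => ?_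
          simp [cheb]
          ring
        rw [hs, hexp i]
        simp
    | succ t ih =>
      refine ⟨ih.2, fun i => ?_⟩
      have hi0 : (i:ℕ) + 1 ≠ 0 := by omega
      have hiN : (i:ℕ) + 1 ≠ N + 1 := by have := i.isLt; omega
      rw [show t+1+1 = t+2 from rfl, solFin_step N b f t _ hi0 hiN]
      have hA : solFin N b f (t+1) ((i:ℕ)+1+1) =
          (if h : (i:ℕ)+1 < N then ∑ k, cheb (lam k) (t+1) / rho k * phi k ⟨(i:ℕ)+1, h⟩
            else 0) := by
        by_cases h : (i:ℕ)+1 < N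
        · rw [dif_pos h]; exact ih.2 ⟨(i:ℕ)+1, h⟩
        · rw [dif_neg h, show (i:ℕ)+1+1 = N+1 by have := i.isLt; omega]
          exact solFin_right N b f (t+1)
      have hB : solFin N b f (t+1) ((i:ℕ)+1-1) =
          (if h : 0 < (i:ℕ) then ∑ k, cheb (lam k) (t+1) / rho k *
            phi k ⟨(i:ℕ)-1, lt_of_le_of_lt (Nat.sub_le _ _) i.isLt⟩ else 0) := by
        rw [show (i:ℕ)+1-1 = (i:ℕ) from rfl]
        by_cases h : 0 < (i:ℕ)
        · rw [dif_pos h]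
          have h2 : solFin N b f (t+1) ((i:ℕ)-1+1) = ∑ k, cheb (lam k) (t+1) / rho k *
              phi k ⟨(i:ℕ)-1, lt_of_le_of_lt (Nat.sub_le _ _) i.isLt⟩ :=
            ih.2 ⟨(i:ℕ)-1, lt_of_le_of_lt (Nat.sub_le _ _) i.isLt⟩
          rw [show (i:ℕ)-1+1 = (i:ℕ) by omega] at h2
          exact h2
        · rw [dif_neg h, show (i:ℕ) = 0 by omega, solFin_left]
          simp [hf]
      rw [hA, hB, ih.2 i, ih.1 i]
      have hd1 : (if h : (i:ℕ)+1 < N then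
            ∑ k, cheb (lam k) (t+1) / rho k * phi k ⟨(i:ℕ)+1, h⟩ else 0)
          = ∑ k, cheb (lam k) (t+1) / rho k *
            (if h : (i:ℕ)+1 < N then phi k ⟨(i:ℕ)+1, h⟩ else 0) := by
        split_ifs with h
        · rfl
        · simp
      have hd2 : (if h : 0 < (i:ℕ) then ∑ k, cheb (lam k) (t+1) / rho k *
            phi k ⟨(i:ℕ)-1, lt_of_le_of_lt (Nat.sub_le _ _) i.isLt⟩ else 0)
          = ∑ k, cheb (lam k) (t+1) / rho k *
            (if h : 0 < (i:ℕ) then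
              phi k ⟨(i:ℕ)-1, lt_of_le_of_lt (Nat.sub_le _ _) i.isLt⟩ else 0) := by
        split_ifs with h
        · rfl
        · simp
      rw [hd1, hd2, ← Finset.sum_add_distrib, Finset.mul_sum, ← Finset.sum_sub_distrib,
        ← Finset.sum_sub_distrib]
      refine Finset.sum_congr rfl fun k _ => ?_
      have hm := congrFun (heig k) i
      rw [jacobi_mulVec] at hm
      have hsm : (lam k • phi k) i = lam k * phi k i := rfl
      rw [hsm] at hm
      have hc : cheb (lam k) (t+2) = lam k * cheb (lam k) (t+1) - cheb (lam k) t := by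
        simp [cheb]
      rw [show t+1+1 = t+2 from rfl, hc]
      linear_combination (cheb (lam k) (t+1) / rho k) * hm
  intro t
  have h := (key t).1 ⟨0, hN⟩
  rw [show ((⟨0, hN⟩ : Fin N):ℕ) + 1 = 1 from rfl] at h
  rw [h]
  exact Finset.sum_congr rfl fun k _ => by rw [hfirst k, mul_one]
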